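/- Let G be a finite simple graph with maximum vertex degree at most z (z ≥ 1 an integer) and let S be a nonempty subset of its vertices. For an integer s ≥ 1, let M'_z(s, S) denote the number of vertex subsets T with |T| = s (not necessarily containing S) such that every connected component of the induced subgraph G[T] contains at least one vertex of S. Then M'_z(s, S) ≤ ((z·e)^s / e) · ((1 + 1/z)^{|S|} − 1), where e is Euler's number. -/

import Mathlib

set_option linter.unusedSectionVars false
set_option maxHeartbeats 1000000

open Nat

section Numeric


lemma natFact (s : ℕ) : ∀ (d a : ℕ), a + d ≤ s → (a + d) ! ≤ a ! * s ^ d := by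
  intro d
  induction d with
  | zero => intro a _; simp
  | succ d ih =>
    intro a h
    have h1 : a + d ≤ s := by omega
    calc (a + (d+1)) ! = (a + d) ! * (a + d + 1) := by
          rw [show a + (d+1) = (a+d) + 1 by omega, Nat.factorial_succ]; ring
      _ ≤ (a ! * s ^ d) * s := Nat.mul_le_mul (ih a h1) (by omega)
      _ = a ! * s ^ (d+1) := by ring

lemma realPow (s : ℕ) (hs : 1 ≤ s) :
    (s : ℝ) ^ (s - 1) ≤ Real.exp 1 ^ (s - 1) * (s - 1) ! := by
  induction s, hs using Nat.le_induction with
  | base => simp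
  | succ s hs ih =>
    have hs0 : (0 : ℝ) < s := by exact_mod_cast hs
    have h1 : (s : ℝ) + 1 ≤ s * Real.exp (1 / s) := by
      have := Real.add_one_le_exp (1 / (s:ℝ))
      calc (s:ℝ) + 1 = s * (1/s + 1) := by field_simp; ring
        _ ≤ s * Real.exp (1/s) := by nlinarith
    have h2 : ((s:ℝ) + 1) ^ s ≤ (s:ℝ) ^ s * Real.exp 1 := by
      calc ((s:ℝ) + 1) ^ s ≤ (s * Real.exp (1/s)) ^ s := by
            apply pow_le_pow_left₀ (by positivity) h1
        _ = (s:ℝ)^s * Real.exp (1/s) ^ s := mul_pow _ _ _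
        _ = (s:ℝ)^s * Real.exp 1 := by
            rw [← Real.exp_nat_mul]
            congr 1
            field_simp
    have hss : (s:ℝ)^s = s * (s:ℝ)^(s-1) := by
      have h := pow_succ (s:ℝ) (s-1)
      rw [Nat.sub_add_cancel hs] at h
      rw [h]; ring
    have hfac : (s ! : ℝ) = s * ((s-1) ! : ℕ) := by
      rw [← Nat.cast_mul, Nat.mul_factorial_pred (by omega)]
    have hexp : Real.exp 1 ^ ((s+1) - 1) = Real.exp 1 ^ (s-1) * Real.exp 1 := by
      rw [show (s+1) - 1 = (s-1) + 1 by omega, pow_succ]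
    rw [show s + 1 - 1 = s from rfl]
    push_cast
    calc ((s:ℝ)+1)^s ≤ (s:ℝ)^s * Real.exp 1 := h2
      _ = s * (s:ℝ)^(s-1) * Real.exp 1 := by rw [hss]
      _ ≤ s * (Real.exp 1 ^ (s-1) * ((s-1)! : ℕ)) * Real.exp 1 := by
          have he : (0:ℝ) < Real.exp 1 := Real.exp_pos 1
          gcongr
      _ = Real.exp 1 ^ s * (s ! : ℕ) := by
          have h := pow_succ (Real.exp 1) (s-1)
          rw [Nat.sub_add_cancel hs] at h
          rw [h, hfac]; ring

lemma chooseBound (s z k : ℕ) (hs : 1 ≤ s) (hk : 1 ≤ k) (hks : k ≤ s) :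
    (((s * z).choose (s - k) : ℕ) : ℝ) ≤ Real.exp 1 ^ (s - 1) * (z : ℝ) ^ (s - k) := by
  set j := s - k with hj
  have hjs : j ≤ s - 1 := by omega
  have hnat : ((s-1) ! : ℕ) ≤ j ! * s ^ ((s-1) - j) := by
    have := natFact s ((s-1) - j) j (by omega)
    rwa [show j + ((s-1) - j) = s - 1 by omega] at this
  have hsj : (s:ℝ)^j ≤ Real.exp 1 ^ (s-1) * j ! := by
    have hfacpos : (0:ℝ) < ((s-1) ! : ℕ) := by exact_mod_cast Nat.factorial_pos _
    have h1 : (s:ℝ)^j * ((s-1) ! : ℕ) ≤ (j ! : ℕ) * (s:ℝ)^(s-1) := by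
      calc (s:ℝ)^j * ((s-1) ! : ℕ) ≤ (s:ℝ)^j * ((j ! * s ^ ((s-1) - j) : ℕ) : ℝ) := by
            apply mul_le_mul_of_nonneg_left (by exact_mod_cast hnat) (by positivity)
        _ = (j ! : ℕ) * ((s:ℝ)^j * (s:ℝ)^((s-1)-j)) := by push_cast; ring
        _ = (j ! : ℕ) * (s:ℝ)^(s-1) := by rw [← pow_add, show j + ((s-1)-j) = s-1 by omega]
    have h2 : (s:ℝ)^j * ((s-1) ! : ℕ) ≤ (j ! : ℕ) * (Real.exp 1 ^ (s-1) * ((s-1) ! : ℕ)) := by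
      calc (s:ℝ)^j * ((s-1) ! : ℕ) ≤ (j ! : ℕ) * (s:ℝ)^(s-1) := h1
        _ ≤ (j ! : ℕ) * (Real.exp 1 ^ (s-1) * ((s-1) ! : ℕ)) := by
            apply mul_le_mul_of_nonneg_left (realPow s hs) (by positivity)
    have := le_of_mul_le_mul_right (by linarith [h2] :
      (s:ℝ)^j * ((s-1) ! : ℕ) ≤ (Real.exp 1 ^ (s-1) * j !) * ((s-1) ! : ℕ)) hfacpos
    exact this
  have hchoose : (((s * z).choose j : ℕ) : ℝ) ≤ ((s*z : ℕ) : ℝ) ^ j / j ! :=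
    Nat.choose_le_pow_div j (s*z)
  have hfpos : (0:ℝ) < (j ! : ℕ) := by exact_mod_cast Nat.factorial_pos _
  calc (((s * z).choose j : ℕ) : ℝ) ≤ ((s*z : ℕ) : ℝ) ^ j / j ! := hchoose
    _ = (s:ℝ)^j * (z:ℝ)^j / j ! := by push_cast; rw [mul_pow]
    _ ≤ (Real.exp 1 ^ (s-1) * j !) * (z:ℝ)^j / j ! := by
        gcongr
    _ = Real.exp 1 ^ (s-1) * (z:ℝ)^j := by field_simp

end Numeric

section Codes
variable {z s : ℕ}



def Bof (s : ℕ) {z : ℕ} (L : List (Finset (Fin z))) : Finset (Fin s × Fin z) :=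
  Finset.univ.biUnion (fun i : Fin s => (L.getD i ∅).image (fun a => (i, a)))

lemma mem_Bof {L : List (Finset (Fin z))} {i : Fin s} {a : Fin z} :
    (i, a) ∈ Bof s L ↔ a ∈ L.getD i ∅ := by
  simp only [Bof, Finset.mem_biUnion, Finset.mem_univ, true_and, Finset.mem_image]
  constructor
  · rintro ⟨i', a', ha', h⟩
    obtain ⟨h1, h2⟩ := Prod.mk.injEq .. ▸ h
    rw [← h1, ← h2] at *; exact ha'
  · intro h; exact ⟨i, a, h, rfl⟩

lemma sum_getD {β : Type*} (L : List (Finset β)) :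
    ∑ i ∈ Finset.range L.length, (L.getD i ∅).card = (L.map Finset.card).sum := by
  induction L with
  | nil => simp
  | cons a L ih =>
    rw [List.length_cons, Finset.sum_range_succ']
    simp only [List.getD_cons_succ, List.getD_cons_zero, List.map_cons, List.sum_cons]
    rw [ih]; omega

lemma card_Bof (L : List (Finset (Fin z))) (hL : L.length = s) :
    (Bof s L).card = (L.map Finset.card).sum := by
  rw [Bof, Finset.card_biUnion]
  · have h1 : ∀ i : Fin s, ((L.getD i ∅).image (fun a => ((i : Fin s), a))).card
        = (L.getD (i : ℕ) ∅).card := by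
      intro i
      apply Finset.card_image_of_injective
      intro a b h
      exact (Prod.mk.injEq .. ▸ h).2
    rw [Finset.sum_congr rfl (fun i _ => h1 i)]
    rw [Fin.sum_univ_eq_sum_range (fun i => (L.getD i ∅).card) s, ← hL]
    exact sum_getD L
  · intro x _ y _ hxy
    rw [Function.onFun, Finset.disjoint_left]
    rintro ⟨i, a⟩ hx hy
    simp only [Finset.mem_image] at hx hy
    obtain ⟨a', _, h'⟩ := hx
    obtain ⟨a'', _, h''⟩ := hy
    have hxi : x = i := (Prod.mk.injEq .. ▸ h').1
    have hyi : y = i := (Prod.mk.injEq .. ▸ h'').1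
    exact hxy (hxi.trans hyi.symm)

lemma Bof_inj {L₁ L₂ : List (Finset (Fin z))} (h₁ : L₁.length = s) (h₂ : L₂.length = s)
    (h : Bof s L₁ = Bof s L₂) : L₁ = L₂ := by
  apply List.ext_getElem (h₁.trans h₂.symm)
  intro i hi1 hi2
  have his : i < s := h₁ ▸ hi1
  ext a
  rw [← List.getD_eq_getElem L₁ ∅ hi1, ← List.getD_eq_getElem L₂ ∅ hi2]
  constructor
  · intro ha
    have : ((⟨i, his⟩ : Fin s), a) ∈ Bof s L₁ := mem_Bof.mpr ha
    exact mem_Bof.mp (h ▸ this)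
  · intro ha
    have : ((⟨i, his⟩ : Fin s), a) ∈ Bof s L₂ := mem_Bof.mpr ha
    exact mem_Bof.mp (h.symm ▸ this)

end Codes


section DFS
variable {V : Type*} [Fintype V] [DecidableEq V] {z : ℕ}
set_option linter.unusedSectionVars false

def runDFS (nbr : V → Fin z → V) (f : V → Finset V → Finset (Fin z)) :
    ℕ → List V → Finset V → List V × List (Finset (Fin z))
  | 0, _, _ => ([], [])
  | _+1, [], _ => ([], [])
  | n+1, u::tl, D =>
      let A := f u D
      let ch := (A.sort (· ≤ ·)).map (nbr u)
      let r := runDFS nbr f n (ch ++ tl) (D ∪ ch.toFinset)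
      (u :: r.1, A :: r.2)


lemma runDFS_det (nbr : V → Fin z → V) (f g : V → Finset V → Finset (Fin z)) :
    ∀ (n : ℕ) (st : List V) (D₁ D₂ : Finset V),
      (runDFS nbr f n st D₁).2 = (runDFS nbr g n st D₂).2 →
      (runDFS nbr f n st D₁).1 = (runDFS nbr g n st D₂).1 := by
  intro n
  induction n with
  | zero => intro st D₁ D₂ _; simp [runDFS]
  | succ n ih =>
    intro st D₁ D₂ h
    cases st with
    | nil => simp [runDFS]
    | cons u tl =>
      simp only [runDFS, List.cons.injEq] at h ⊢
      obtain ⟨hA, htail⟩ := h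
      rw [hA] at htail ⊢
      exact ⟨trivial, ih _ _ _ htail⟩

variable {G : SimpleGraph V}

lemma closed_of (T Rt P : Finset V)
    (hreach : ∀ w ∈ T, ∃ r ∈ Rt, Relation.ReflTransGen (fun x y => G.Adj x y ∧ y ∈ T) r w)
    (hRP : Rt ⊆ P)
    (hcl : ∀ u ∈ P, ∀ w, G.Adj u w → w ∈ T → w ∈ P) : T ⊆ P := by
  intro w hw
  obtain ⟨r, hr, hconn⟩ := hreach w hw
  clear hw
  induction hconn with
  | refl => exact hRP hr
  | tail _ h₂ ih => exact hcl _ ih _ h₂.1 h₂.2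

/-- The exploration oracle for a target set `T`. -/
noncomputable def expl (G : SimpleGraph V) (lbl : V → V → Fin z) (T : Finset V)
    (u : V) (D : Finset V) : Finset (Fin z) :=
  ((((G.neighborSet u).toFinite.toFinset) ∩ T) \ D).image (lbl u)

lemma runDFS_spec
    (nbr : V → Fin z → V) (lbl : V → V → Fin z)
    (hnl : ∀ u w, G.Adj u w → nbr u (lbl u w) = w)
    (T Rt : Finset V)
    (hreach : ∀ w ∈ T, ∃ r ∈ Rt, Relation.ReflTransGen (fun x y => G.Adj x y ∧ y ∈ T) r w) :
    ∀ (n : ℕ) (st : List V) (D P : Finset V),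
      st.Nodup →
      Disjoint st.toFinset P →
      D = P ∪ st.toFinset →
      D ⊆ T →
      Rt ⊆ D →
      (∀ u ∈ P, ∀ w, G.Adj u w → w ∈ T → w ∈ D) →
      (T \ P).card ≤ n →
      (runDFS nbr (expl G lbl T) n st D).1.toFinset = T \ P ∧
      (runDFS nbr (expl G lbl T) n st D).1.Nodup ∧
      (runDFS nbr (expl G lbl T) n st D).2.length
        = (runDFS nbr (expl G lbl T) n st D).1.length ∧
      ((runDFS nbr (expl G lbl T) n st D).2.map Finset.card).sum = (T \ D).card := by
  intro n
  induction n with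
  | zero =>
    intro st D P hnd hdisj hDeq hDT hRD hcl hcard
    match st with
    | u :: tl =>
      exfalso
      have huT : u ∈ T := hDT (by rw [hDeq]; exact Finset.mem_union_right _ (by simp))
      have huP : u ∉ P := fun h => (Finset.disjoint_left.mp hdisj (by simp) h)
      have : 0 < (T \ P).card := Finset.card_pos.mpr ⟨u, Finset.mem_sdiff.mpr ⟨huT, huP⟩⟩
      omega
    | [] =>
      have hPD : D = P := by simpa using hDeq
      subst hPD
      have hTD : T ⊆ D := closed_of T Rt D hreach hRD hcl
      have h1 : T \ D = ∅ := Finset.sdiff_eq_empty_iff_subset.mpr hTD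
      simp [runDFS, h1]
  | succ n ih =>
    intro st D P hnd hdisj hDeq hDT hRD hcl hcard
    match st with
    | [] =>
      have hPD : D = P := by simpa using hDeq
      subst hPD
      have hTD : T ⊆ D := closed_of T Rt D hreach hRD hcl
      have h1 : T \ D = ∅ := Finset.sdiff_eq_empty_iff_subset.mpr hTD
      simp [runDFS, h1]
    | u :: tl =>
      -- basic facts about u
      have hu_D : u ∈ D := by rw [hDeq]; exact Finset.mem_union_right _ (by simp)
      have huT : u ∈ T := hDT hu_D
      have huP : u ∉ P := fun h => (Finset.disjoint_left.mp hdisj (by simp) h)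
      have hu_tl : u ∉ tl := (List.nodup_cons.mp hnd).1
      have htlnd : tl.Nodup := (List.nodup_cons.mp hnd).2
      -- children set
      set C : Finset V := ((((G.neighborSet u).toFinite.toFinset) ∩ T) \ D) with hC
      have hA : expl G lbl T u D = C.image (lbl u) := rfl
      set A : Finset (Fin z) := C.image (lbl u) with hAdef
      have hmemC : ∀ w ∈ C, G.Adj u w := by
        intro w hw
        have := (Finset.mem_sdiff.mp hw).1
        have := (Finset.mem_inter.mp this).1
        simpa using this
      have hinv : ∀ w ∈ C, nbr u (lbl u w) = w := fun w hw => hnl u w (hmemC w hw)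
      set ch : List V := (A.sort (· ≤ ·)).map (nbr u) with hch
      have hchto : ch.toFinset = C := by
        ext x
        simp only [hch, List.mem_toFinset, List.mem_map, Finset.mem_sort]
        constructor
        · rintro ⟨a, haA, rfl⟩
          obtain ⟨w, hw, rfl⟩ := Finset.mem_image.mp haA
          rwa [hinv w hw]
        · intro hx
          exact ⟨lbl u x, Finset.mem_image_of_mem _ hx, hinv x hx⟩
      have hchnd : ch.Nodup := by
        refine List.Nodup.map_on ?_ (A.sort_nodup (· ≤ ·))
        intro x hx y hy hxy
        rw [Finset.mem_sort] at hx hy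
        obtain ⟨wx, hwx, rfl⟩ := Finset.mem_image.mp hx
        obtain ⟨wy, hwy, rfl⟩ := Finset.mem_image.mp hy
        rw [hinv wx hwx, hinv wy hwy] at hxy
        rw [hxy]
      have hcA : A.card = C.card := Finset.card_image_of_injOn (by
        intro a ha b hb hab
        have := congrArg (nbr u) hab
        rwa [hinv a ha, hinv b hb] at this)
      have hCD : Disjoint C D := by
        rw [hC]; exact Finset.sdiff_disjoint
      have hCT : C ⊆ T := by
        intro x hx; exact (Finset.mem_inter.mp (Finset.mem_sdiff.mp hx).1).2
      have hCTD : C ⊆ T \ D := fun x hx =>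
        Finset.mem_sdiff.mpr ⟨hCT hx, Finset.disjoint_left.mp hCD hx⟩
      -- unfold one step
      have hrun : runDFS nbr (expl G lbl T) (n+1) (u :: tl) D
          = (u :: (runDFS nbr (expl G lbl T) n (ch ++ tl) (D ∪ C)).1,
             A :: (runDFS nbr (expl G lbl T) n (ch ++ tl) (D ∪ C)).2) := by
        rw [runDFS]
        simp only [hA, ← hch, hchto]
      -- apply induction hypothesis
      have hst' : (ch ++ tl).Nodup := by
        rw [List.nodup_append]
        refine ⟨hchnd, htlnd, ?_⟩
        intro a ha b hatl hab
        rw [← hab] at hatl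
        have haC : a ∈ C := by rw [← hchto]; exact List.mem_toFinset.mpr ha
        have : a ∈ D := by
          rw [hDeq]; refine Finset.mem_union_right _ ?_; simp [hatl]
        exact Finset.disjoint_left.mp hCD haC this
      have hdisj' : Disjoint (ch ++ tl).toFinset (insert u P) := by
        rw [Finset.disjoint_left]
        intro a ha haP
        rw [List.toFinset_append, Finset.mem_union] at ha
        have haD : a ∈ insert u P → a ∈ D := by
          intro h
          rcases Finset.mem_insert.mp h with h | h
          · rw [h]; exact hu_D
          · rw [hDeq]; exact Finset.mem_union_left _ h
        rcases ha with ha | ha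
        · have haC : a ∈ C := by rw [← hchto]; exact ha
          exact Finset.disjoint_left.mp hCD haC (haD haP)
        · have hastl : a ∈ tl := List.mem_toFinset.mp ha
          rcases Finset.mem_insert.mp haP with h | h
          · exact hu_tl (h ▸ hastl)
          · exact Finset.disjoint_left.mp hdisj (by simp [hastl]) h
      have hDeq' : D ∪ C = insert u P ∪ (ch ++ tl).toFinset := by
        rw [List.toFinset_append, hchto, hDeq]
        ext x
        simp only [Finset.mem_union, Finset.mem_insert, List.toFinset_cons,
          Finset.mem_insert, List.mem_toFinset]
        constructor
        · rintro ((h | (h | h)) | h) <;> tauto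
        · rintro ((h | h) | (h | h)) <;> tauto
      have hDT' : D ∪ C ⊆ T := Finset.union_subset hDT hCT
      have hRD' : Rt ⊆ D ∪ C := hRD.trans Finset.subset_union_left
      have hcl' : ∀ v ∈ insert u P, ∀ w, G.Adj v w → w ∈ T → w ∈ D ∪ C := by
        intro v hv w hadj hwT
        rcases Finset.mem_insert.mp hv with rfl | hv
        · by_cases hwD : w ∈ D
          · exact Finset.mem_union_left _ hwD
          · refine Finset.mem_union_right _ ?_
            rw [hC]
            refine Finset.mem_sdiff.mpr ⟨Finset.mem_inter.mpr ⟨?_, hwT⟩, hwD⟩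
            simpa using hadj
        · exact Finset.mem_union_left _ (hcl v hv w hadj hwT)
      have hcard' : (T \ insert u P).card ≤ n := by
        have h1 : T \ insert u P = (T \ P).erase u := by
          ext x; simp only [Finset.mem_sdiff, Finset.mem_insert, Finset.mem_erase]; tauto
        rw [h1, Finset.card_erase_of_mem (Finset.mem_sdiff.mpr ⟨huT, huP⟩)]
        omega
      obtain ⟨ih1, ih2, ih3, ih4⟩ := ih (ch ++ tl) (D ∪ C) (insert u P)
        hst' hdisj' hDeq' hDT' hRD' hcl' hcard'
      rw [hrun]
      refine ⟨?_, ?_, ?_, ?_⟩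
      · rw [List.toFinset_cons, ih1]
        ext x
        simp only [Finset.mem_insert, Finset.mem_sdiff, Finset.mem_insert]
        constructor
        · rintro (rfl | ⟨h1, h2⟩)
          · exact ⟨huT, huP⟩
          · exact ⟨h1, fun h => h2 (Or.inr h)⟩
        · rintro ⟨h1, h2⟩
          by_cases hx : x = u
          · exact Or.inl hx
          · exact Or.inr ⟨h1, fun h => by rcases h with h | h; exact hx h; exact h2 h⟩
      · rw [List.nodup_cons]
        refine ⟨?_, ih2⟩
        intro hmem
        have : u ∈ T \ insert u P := by rw [← ih1]; exact List.mem_toFinset.mpr hmem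
        simp at this
      · simp [ih3]
      · simp only [List.map_cons, List.sum_cons, ih4]
        have hsub : (T \ (D ∪ C)).card = (T \ D).card - C.card := by
          have : T \ (D ∪ C) = (T \ D) \ C := by
            ext x; simp only [Finset.mem_sdiff, Finset.mem_union]; tauto
          rw [this, Finset.card_sdiff_of_subset hCTD]
        have hle : C.card ≤ (T \ D).card := Finset.card_le_card hCTD
        rw [hsub, hcA]
        omega

end DFS

section Main
variable {V : Type*} [Fintype V] [DecidableEq V]



lemma exists_nbr_lbl (G : SimpleGraph V) (z : ℕ) (hz : 1 ≤ z)
    (hdeg : ∀ v : V, (G.neighborSet v).ncard ≤ z) (hV : Nonempty V) :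
    ∃ (nbr : V → Fin z → V) (lbl : V → V → Fin z),
      ∀ u w, G.Adj u w → nbr u (lbl u w) = w := by
  classical
  have hFz : Nonempty (Fin z) := ⟨⟨0, hz⟩⟩
  have key : ∀ u : V, ∃ (l : V → Fin z) (nb : Fin z → V),
      ∀ w, G.Adj u w → nb (l w) = w := by
    intro u
    have hcard : Fintype.card (G.neighborSet u) ≤ z := by
      have := hdeg u
      rwa [Set.ncard_eq_toFinset_card', Set.toFinset_card] at this
    obtain ⟨e⟩ : Nonempty (G.neighborSet u ↪ Fin z) := by
      apply Function.Embedding.nonempty_of_card_le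
      simpa using hcard
    refine ⟨fun w => if h : w ∈ G.neighborSet u then e ⟨w, h⟩ else Classical.arbitrary _,
      fun j => if h : ∃ w, G.Adj u w ∧
          (if h' : w ∈ G.neighborSet u then e ⟨w, h'⟩ else Classical.arbitrary _) = j
        then h.choose else Classical.arbitrary V, ?_⟩
    intro w hadj
    have hwmem : w ∈ G.neighborSet u := hadj
    beta_reduce
    simp only [dif_pos hwmem]
    have hex : ∃ w', G.Adj u w' ∧
        (if h' : w' ∈ G.neighborSet u then e ⟨w', h'⟩ else Classical.arbitrary _)
          = e ⟨w, hwmem⟩ := ⟨w, hadj, by rw [dif_pos hwmem]⟩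
    rw [dif_pos hex]
    obtain ⟨hadj', heq⟩ := hex.choose_spec
    have hmem' : hex.choose ∈ G.neighborSet u := hadj'
    rw [dif_pos hmem'] at heq
    have := e.injective heq
    exact congrArg Subtype.val this
  choose l nb hln using key
  exact ⟨nb, l, hln⟩




lemma reach_conn {G : SimpleGraph V} {T : Finset V} {x y : (T : Set V)}
    (h : (G.induce (T : Set V)).Reachable x y) :
    Relation.ReflTransGen (fun a b => G.Adj a b ∧ b ∈ T) x.1 y.1 := by
  obtain ⟨w⟩ := h
  induction w with
  | nil => exact .refl
  | @cons a b c hab p ih =>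
    exact Relation.ReflTransGen.head ⟨by simpa using hab, Finset.mem_coe.mp b.2⟩ ih

end Main
/-- **Cluster counting, touching version.** -/
theorem stmt_1 {V : Type*} [Fintype V] [DecidableEq V]
    (G : SimpleGraph V) (z : ℕ) (hz : 1 ≤ z)
    (hdeg : ∀ v : V, (G.neighborSet v).ncard ≤ z)
    (S : Finset V) (hS : S.Nonempty) (s : ℕ) (hs : 1 ≤ s) :
    (({T : Finset V | T.card = s ∧
        ∀ v, ∀ hv : v ∈ T, ∃ u, ∃ hu : u ∈ T, u ∈ S ∧
          (G.induce (T : Set V)).Reachable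
            ⟨v, Finset.mem_coe.mpr hv⟩ ⟨u, Finset.mem_coe.mpr hu⟩} : Set (Finset V)).ncard : ℝ)
      ≤ ((z : ℝ) * Real.exp 1) ^ s / Real.exp 1 * ((1 + 1 / (z : ℝ)) ^ S.card - 1) := by
  classical
  obtain ⟨v0, hv0⟩ := hS
  have hVne : Nonempty V := ⟨v0⟩
  obtain ⟨nbr, lbl, hnl⟩ := exists_nbr_lbl G z hz hdeg hVne
  letI : LinearOrder V := LinearOrder.lift' (fun v => (Fintype.equivFin V) v)
    (Fintype.equivFin V).injective
  set N : Set (Finset V) := {T : Finset V | T.card = s ∧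
        ∀ v, ∀ hv : v ∈ T, ∃ u, ∃ hu : u ∈ T, u ∈ S ∧
          (G.induce (T : Set V)).Reachable
            ⟨v, Finset.mem_coe.mpr hv⟩ ⟨u, Finset.mem_coe.mpr hu⟩} with hNdef
  have hNfin : N.Finite := Set.toFinite _
  set code : Finset V → List (Finset (Fin z)) := fun T =>
    (runDFS nbr (expl G lbl T) s ((S ∩ T).sort (· ≤ ·)) (S ∩ T)).2 with hcode
  set visited : Finset V → List V := fun T =>
    (runDFS nbr (expl G lbl T) s ((S ∩ T).sort (· ≤ ·)) (S ∩ T)).1 with hvis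
  -- key facts for each valid T
  have key : ∀ T ∈ N, (visited T).toFinset = T ∧ (code T).length = s ∧
      ((code T).map Finset.card).sum = s - (S ∩ T).card ∧ (S ∩ T).Nonempty := by
    intro T hT
    obtain ⟨hcard, hprop⟩ := hT
    have hreach : ∀ w ∈ T, ∃ r ∈ S ∩ T,
        Relation.ReflTransGen (fun x y => G.Adj x y ∧ y ∈ T) r w := by
      intro w hw
      obtain ⟨u, hu, huS, hre⟩ := hprop w hw
      exact ⟨u, Finset.mem_inter.mpr ⟨huS, hu⟩, reach_conn hre.symm⟩
    obtain ⟨c1, c2, c3, c4⟩ := runDFS_spec nbr lbl hnl T (S ∩ T) hreach s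
      ((S ∩ T).sort (· ≤ ·)) (S ∩ T) ∅
      (Finset.sort_nodup _ _)
      (by simp)
      (by simp)
      Finset.inter_subset_right
      (le_refl _)
      (by simp)
      (by simp [hcard])
    have hvT : (visited T).toFinset = T := by
      have h0 : (visited T).toFinset = T \ ∅ := c1
      rw [h0, Finset.sdiff_empty]
    have hvlen : (visited T).length = s := by
      have h2 : (visited T).toFinset.card = (visited T).length :=
        List.toFinset_card_of_nodup c2
      rw [hvT] at h2
      rw [← h2]; exact hcard
    have hclen : (code T).length = (visited T).length := c3
    have hsum : ((code T).map Finset.card).sum = (T \ (S ∩ T)).card := c4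
    refine ⟨hvT, by rw [hclen, hvlen], ?_, ?_⟩
    · rw [hsum, Finset.card_sdiff_of_subset Finset.inter_subset_right, hcard]
    · obtain ⟨v, hv⟩ := Finset.card_pos.mp (by omega : 0 < T.card)
      obtain ⟨u, hu, huS, _⟩ := hprop v hv
      exact ⟨u, Finset.mem_inter.mpr ⟨huS, hu⟩⟩
  -- the encoding map
  set Φ : Finset V → Finset V × Finset (Fin s × Fin z) :=
    fun T => (S ∩ T, Bof s (code T)) with hΦ
  set Tgt : Finset (Finset V × Finset (Fin s × Fin z)) :=
    (S.powerset.filter (fun R => R.Nonempty ∧ R.card ≤ s)).biUnion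
      (fun R => ((Finset.univ : Finset (Fin s × Fin z)).powersetCard (s - R.card)).image
        (fun B => (R, B))) with hTgt
  have hmaps : ∀ T ∈ N, Φ T ∈ Tgt := by
    intro T hT
    obtain ⟨h1, h2, h3, h4⟩ := key T hT
    have hcardT : T.card = s := hT.1
    have hkle : (S ∩ T).card ≤ s := by
      rw [← hcardT]; exact Finset.card_le_card Finset.inter_subset_right
    rw [hTgt]
    apply Finset.mem_biUnion.mpr
    refine ⟨S ∩ T, ?_, ?_⟩
    · apply Finset.mem_filter.mpr
      exact ⟨Finset.mem_powerset.mpr Finset.inter_subset_left, h4, hkle⟩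
    · apply Finset.mem_image.mpr
      refine ⟨Bof s (code T), ?_, rfl⟩
      apply Finset.mem_powersetCard.mpr
      exact ⟨Finset.subset_univ _, by rw [card_Bof _ h2, h3]⟩
  have hinj : Set.InjOn Φ N := by
    intro T₁ hT₁ T₂ hT₂ heq
    obtain ⟨k11, k12, _, _⟩ := key T₁ hT₁
    obtain ⟨k21, k22, _, _⟩ := key T₂ hT₂
    rw [hΦ] at heq
    have hR : S ∩ T₁ = S ∩ T₂ := congrArg Prod.fst heq
    have hB : Bof s (code T₁) = Bof s (code T₂) := congrArg Prod.snd heq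
    have hcodes : code T₁ = code T₂ := Bof_inj k12 k22 hB
    have hv : visited T₁ = visited T₂ := by
      have hc : (runDFS nbr (expl G lbl T₁) s ((S ∩ T₁).sort (· ≤ ·)) (S ∩ T₁)).2
          = (runDFS nbr (expl G lbl T₂) s ((S ∩ T₁).sort (· ≤ ·)) (S ∩ T₁)).2 := by
        have hcodes' : (runDFS nbr (expl G lbl T₁) s ((S ∩ T₁).sort (· ≤ ·)) (S ∩ T₁)).2
            = (runDFS nbr (expl G lbl T₂) s ((S ∩ T₂).sort (· ≤ ·)) (S ∩ T₂)).2 := hcodes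
        rw [← hR] at hcodes'
        exact hcodes'
      have hd := runDFS_det nbr (expl G lbl T₁) (expl G lbl T₂) s
        ((S ∩ T₁).sort (· ≤ ·)) (S ∩ T₁) (S ∩ T₁) hc
      show (runDFS nbr (expl G lbl T₁) s ((S ∩ T₁).sort (· ≤ ·)) (S ∩ T₁)).1
          = (runDFS nbr (expl G lbl T₂) s ((S ∩ T₂).sort (· ≤ ·)) (S ∩ T₂)).1
      rw [← hR]; exact hd
    rw [← k11, ← k21, hv]
  -- cardinality bound
  have hcount : (N.ncard : ℝ) ≤ (Tgt.card : ℝ) := by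
    have h1 : N.ncard = hNfin.toFinset.card := Set.ncard_eq_toFinset_card N hNfin
    have h2 : hNfin.toFinset.card ≤ Tgt.card := by
      apply Finset.card_le_card_of_injOn Φ
      · intro T hT; exact hmaps T (hNfin.mem_toFinset.mp hT)
      · intro a ha b hb
        exact hinj (hNfin.mem_toFinset.mp (Finset.mem_coe.mp ha))
          (hNfin.mem_toFinset.mp (Finset.mem_coe.mp hb))
    rw [h1]; exact_mod_cast h2
  -- counting the target
  set Flt := S.powerset.filter (fun R => R.Nonempty ∧ R.card ≤ s) with hFlt
  have hTgtcard : Tgt.card = ∑ R ∈ Flt, (s * z).choose (s - R.card) := by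
    rw [hTgt, Finset.card_biUnion]
    · apply Finset.sum_congr rfl
      intro R _
      rw [Finset.card_image_of_injective _ (fun a b h => (Prod.mk.injEq .. ▸ h).2)]
      rw [Finset.card_powersetCard, Finset.card_univ]
      congr 1
      simp [Fintype.card_prod]
    · intro x _ y _ hxy
      rw [Function.onFun, Finset.disjoint_left]
      intro p hp hq
      simp only [Finset.mem_image] at hp hq
      obtain ⟨B1, _, h1⟩ := hp
      obtain ⟨B2, _, h2⟩ := hq
      have hx : x = p.1 := by rw [← h1]
      have hy : y = p.1 := by rw [← h2]
      exact hxy (hx.trans hy.symm)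
  have hzpos : (0:ℝ) < (z:ℝ) := by exact_mod_cast hz
  have hterm : ∀ R ∈ Flt, (((s * z).choose (s - R.card) : ℕ) : ℝ)
      ≤ Real.exp 1 ^ (s-1) * (z:ℝ)^s * (1/(z:ℝ))^R.card := by
    intro R hR
    have hR' := Finset.mem_filter.mp hR
    have hRne : R.Nonempty := hR'.2.1
    have hRs : R.card ≤ s := hR'.2.2
    have hk1 : 1 ≤ R.card := Finset.card_pos.mpr hRne
    refine (chooseBound s z R.card hs hk1 hRs).trans (le_of_eq ?_)
    rw [pow_sub₀ (z:ℝ) (ne_of_gt hzpos) hRs, one_div, inv_pow]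
    ring
  have hsum1 : (Tgt.card : ℝ) ≤ Real.exp 1 ^ (s-1) * (z:ℝ)^s *
      ∑ R ∈ S.powerset.filter (fun R => R.Nonempty), (1/(z:ℝ))^R.card := by
    rw [hTgtcard]
    push_cast
    calc ∑ R ∈ Flt, (((s * z).choose (s - R.card) : ℕ) : ℝ)
        ≤ ∑ R ∈ Flt, Real.exp 1 ^ (s-1) * (z:ℝ)^s * (1/(z:ℝ))^R.card :=
          Finset.sum_le_sum hterm
      _ ≤ ∑ R ∈ S.powerset.filter (fun R => R.Nonempty),
            Real.exp 1 ^ (s-1) * (z:ℝ)^s * (1/(z:ℝ))^R.card := by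
          apply Finset.sum_le_sum_of_subset_of_nonneg
          · intro R hR
            rw [hFlt, Finset.mem_filter] at hR
            exact Finset.mem_filter.mpr ⟨hR.1, hR.2.1⟩
          · intro R _ _
            positivity
      _ = Real.exp 1 ^ (s-1) * (z:ℝ)^s *
            ∑ R ∈ S.powerset.filter (fun R => R.Nonempty), (1/(z:ℝ))^R.card := by
          rw [Finset.mul_sum]
  have hsplit : ∑ R ∈ S.powerset.filter (fun R => R.Nonempty), (1/(z:ℝ))^R.card
      = (1 + 1/(z:ℝ))^S.card - 1 := by
    have htot : ∑ R ∈ S.powerset, (1/(z:ℝ))^R.card = (1 + 1/(z:ℝ))^S.card := by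
      have h := Finset.prod_add (fun _ : V => (1:ℝ)/(z:ℝ)) (fun _ => (1:ℝ)) S
      simp only [Finset.prod_const, one_pow, mul_one] at h
      rw [← h, add_comm]
    have hnot : S.powerset.filter (fun R => ¬ R.Nonempty) = {∅} := by
      ext R
      simp only [Finset.mem_filter, Finset.mem_powerset, Finset.not_nonempty_iff_eq_empty,
        Finset.mem_singleton]
      constructor
      · exact fun h => h.2
      · rintro rfl; exact ⟨Finset.empty_subset _, rfl⟩
    have h2 := Finset.sum_filter_add_sum_filter_not S.powerset (fun R => R.Nonempty)
        (fun R => (1/(z:ℝ))^R.card)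
    rw [hnot] at h2
    simp only [Finset.sum_singleton, Finset.card_empty, pow_zero] at h2
    linarith [htot, h2]
  have hrhs : ((z:ℝ) * Real.exp 1)^s / Real.exp 1 = (z:ℝ)^s * Real.exp 1 ^ (s-1) := by
    rw [mul_pow]
    have h := pow_succ (Real.exp 1) (s-1)
    rw [Nat.sub_add_cancel hs] at h
    rw [h]
    have : Real.exp 1 ≠ 0 := (Real.exp_pos 1).ne'
    field_simp
  calc (N.ncard : ℝ) ≤ (Tgt.card : ℝ) := hcount
    _ ≤ Real.exp 1 ^ (s-1) * (z:ℝ)^s * ((1 + 1/(z:ℝ))^S.card - 1) := by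
        rw [← hsplit]; exact hsum1
    _ = ((z:ℝ) * Real.exp 1)^s / Real.exp 1 * ((1 + 1/(z:ℝ))^S.card - 1) := by
        rw [hrhs]; ring
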